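/- Let A be a finite-dimensional commutative k-algebra with basis {e_w}_{w∈W} and trace ⟨·⟩ with nondegenerate induced pairing. Define the third derivatives Λ_{uvw}(t) = ∂³F/∂t_u∂t_v∂t_w of F(t) = ⟨exp(∑ t_w e_w)⟩ and the metric g_{uv} = ⟨e_u e_v⟩ with inverse g^{uv}. Then for all i, j, k, l ∈ W the WDVV equation holds: ∑_{ν,μ} Λ_{ijν}(t) g^{νμ} Λ_{μkl}(t) = ∑_{ν,μ} Λ_{ilν}(t) g^{νμ} Λ_{μjk}(t). -/

import Mathlib

open MvPowerSeries Finset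

/-- Formal partial derivative `∂/∂t_u` of a multivariate formal power series,
acting coefficientwise. -/
noncomputable def fpderiv {W : Type*} {R : Type*} [AddCommMonoid R] (u : W)
    (f : MvPowerSeries W R) : MvPowerSeries W R :=
  fun d => (d u + 1) • f (d + Finsupp.single u 1)

/-- The formal exponential kernel `K(t) = exp (∑_w t_w e_w)`, defined by its
coefficients: the coefficient of `∏ t_w^{d_w}` is `(∏ d_w!)⁻¹ • ∏ e_w^{d_w}`. -/
noncomputable def kker (k : Type*) [Field k] {W A : Type*} [CommRing A] [Algebra k A]
    (e : W → A) : MvPowerSeries W A :=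
  fun d => (((d.prod fun _ n => n.factorial : ℕ) : k))⁻¹ • (d.prod fun w n => e w ^ n)

/-- Coefficientwise extension of a linear functional `A → k` to
`A ⊗ k[[t_w]] → k[[t_w]]`. -/
noncomputable def trExt {k W A : Type*} [Field k] [CommRing A] [Algebra k A]
    (φ : A →ₗ[k] k) (f : MvPowerSeries W A) : MvPowerSeries W k :=
  fun d => φ (f d)

/-- The third partial derivatives `Λ_{uvw}(t) = ∂³F/∂t_u∂t_v∂t_w` of the potential
`F(t) = ⟨exp (∑ t_w e_w)⟩`. -/
noncomputable def lambda3 {k : Type*} [Field k]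
    {A : Type*} [CommRing A] [Algebra k A]
    {W : Type*} (e : W → A) (φ : A →ₗ[k] k) (u v w : W) : MvPowerSeries W k :=
  fpderiv u (fpderiv v (fpderiv w (trExt φ (kker k e))))

lemma fpderiv_trExt {k W A : Type*} [Field k] [CommRing A] [Algebra k A]
    (φ : A →ₗ[k] k) (u : W) (f : MvPowerSeries W A) :
    fpderiv u (trExt φ f) = trExt φ (fpderiv u f) := by
  funext d
  show (d u + 1) • φ (f (d + Finsupp.single u 1)) = φ ((d u + 1) • f (d + Finsupp.single u 1))
  exact (map_nsmul φ _ _).symm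

lemma fpderiv_C_mul {W : Type*} [DecidableEq W] {R : Type*} [CommSemiring R] (u : W) (a : R)
    (f : MvPowerSeries W R) :
    fpderiv u (C (σ := W) (R := R) a * f) = C (σ := W) (R := R) a * fpderiv u f := by
  funext d
  have h1 : (C (σ := W) (R := R) a * f) (d + Finsupp.single u 1) = a * f (d + Finsupp.single u 1) :=
    coeff_C_mul _ _ _
  have h2 : (C (σ := W) (R := R) a * fpderiv u f) d = a * fpderiv u f d := coeff_C_mul _ _ _
  show (d u + 1) • ((C (σ := W) (R := R) a * f) (d + Finsupp.single u 1)) = (C (σ := W) (R := R) a * fpderiv u f) d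
  rw [h1, h2]
  exact (mul_smul_comm _ _ _).symm

lemma fac_prod {W : Type*} [DecidableEq W] (d : W →₀ ℕ) (u : W) :
    ((d + Finsupp.single u 1).prod fun _ n => n.factorial)
      = (d u + 1) * d.prod fun _ n => n.factorial := by
  have he : Finsupp.erase u (d + Finsupp.single u 1) = Finsupp.erase u d := by
    ext w
    rcases eq_or_ne w u with h | h
    · simp [h]
    · rw [Finsupp.erase_ne h, Finsupp.erase_ne h, Finsupp.add_apply,
        Finsupp.single_apply, if_neg (Ne.symm h), add_zero]
  have h1 := Finsupp.mul_prod_erase' (d + Finsupp.single u 1) u (fun _ n => n.factorial)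
    (fun _ => rfl)
  have h2 := Finsupp.mul_prod_erase' d u (fun _ n => n.factorial) (fun _ => rfl)
  simp only [he] at h1
  rw [← h1, ← h2]
  have h3 : ((d + Finsupp.single u 1 : W →₀ ℕ)) u = d u + 1 := by
    rw [Finsupp.add_apply, Finsupp.single_apply, if_pos rfl]
  rw [h3, Nat.factorial_succ, mul_assoc]

lemma pow_prod {W A : Type*} [CommRing A] (d : W →₀ ℕ) (u : W) (e : W → A) :
    ((d + Finsupp.single u 1).prod fun w n => e w ^ n)
      = e u * d.prod fun w n => e w ^ n := by
  rw [Finsupp.prod_add_index' (fun _ => pow_zero _) (fun _ _ _ => pow_add _ _ _)]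
  simp [Finsupp.prod_single_index, mul_comm]

lemma fpderiv_kker (k : Type*) [Field k] [CharZero k] {W A : Type*} [DecidableEq W] [CommRing A]
    [Algebra k A] (e : W → A) (u : W) :
    fpderiv u (kker k e) = C (σ := W) (R := A) (e u) * kker k e := by
  funext d
  have hr : (C (σ := W) (R := A) (e u) * kker k e) d = e u * kker k e d := coeff_C_mul _ _ _
  show (d u + 1) • kker k e (d + Finsupp.single u 1) = (C (σ := W) (R := A) (e u) * kker k e) d
  rw [hr]
  show (d u + 1) •
      ((((d + Finsupp.single u 1).prod fun _ n => n.factorial : ℕ) : k))⁻¹ •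
        ((d + Finsupp.single u 1).prod fun w n => e w ^ n)
    = e u * (((d.prod fun _ n => n.factorial : ℕ) : k))⁻¹ • (d.prod fun w n => e w ^ n)
  rw [fac_prod, pow_prod, ← Nat.cast_smul_eq_nsmul k, smul_smul, mul_smul_comm]
  congr 1
  have hne : ((d u + 1 : ℕ) : k) ≠ 0 := Nat.cast_ne_zero.mpr (Nat.succ_ne_zero _)
  rw [Nat.cast_mul, mul_inv, ← mul_assoc, mul_inv_cancel₀ hne, one_mul]

lemma key_pairing {k A W : Type*} [Field k] [CommRing A] [Algebra k A] [Fintype W]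
    [DecidableEq W] (b : Module.Basis W k A) (φ : A →ₗ[k] k) (ginv : W → W → k)
    (hg : ∀ u v : W, (∑ τ : W, φ ((b u : A) * b τ) * ginv τ v) = if u = v then 1 else 0)
    (x y : A) :
    ∑ ν : W, ∑ μ : W, ginv ν μ * (φ (x * b ν) * φ (b μ * y)) = φ (x * y) := by
  have base : ∀ ρ : W,
      ∑ ν : W, ∑ μ : W, ginv ν μ * (φ ((b ρ : A) * b ν) * φ ((b μ : A) * y))
        = φ ((b ρ : A) * y) := by
    intro ρ
    calc ∑ ν : W, ∑ μ : W, ginv ν μ * (φ ((b ρ : A) * b ν) * φ ((b μ : A) * y))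
        = ∑ μ : W, ∑ ν : W, (φ ((b ρ : A) * b ν) * ginv ν μ) * φ ((b μ : A) * y) := by
          rw [Finset.sum_comm]
          exact Finset.sum_congr rfl fun ν _ => Finset.sum_congr rfl fun μ _ => by ring
      _ = ∑ μ : W, (∑ ν : W, φ ((b ρ : A) * b ν) * ginv ν μ) * φ ((b μ : A) * y) := by
          simp [Finset.sum_mul]
      _ = ∑ μ : W, (if ρ = μ then (1:k) else 0) * φ ((b μ : A) * y) := by
          exact Finset.sum_congr rfl fun μ _ => by rw [hg]
      _ = φ ((b ρ : A) * y) := by simp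
  have hφ : ∀ z : A, φ (x * z) = ∑ ρ : W, b.repr x ρ * φ ((b ρ : A) * z) := by
    intro z
    conv_lhs => rw [← b.sum_repr x]
    rw [Finset.sum_mul, map_sum]
    exact Finset.sum_congr rfl fun ρ _ => by rw [smul_mul_assoc, map_smul, smul_eq_mul]
  calc ∑ ν : W, ∑ μ : W, ginv ν μ * (φ (x * b ν) * φ ((b μ : A) * y))
      = ∑ ν : W, ∑ μ : W, ∑ ρ : W,
          b.repr x ρ * (ginv ν μ * (φ ((b ρ : A) * b ν) * φ ((b μ : A) * y))) := by
        refine Finset.sum_congr rfl fun ν _ => Finset.sum_congr rfl fun μ _ => ?_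
        rw [hφ (b ν), Finset.sum_mul, Finset.mul_sum]
        exact Finset.sum_congr rfl fun ρ _ => by ring
    _ = ∑ ρ : W, ∑ ν : W, ∑ μ : W,
          b.repr x ρ * (ginv ν μ * (φ ((b ρ : A) * b ν) * φ ((b μ : A) * y))) := by
        rw [show (∑ ν : W, ∑ μ : W, ∑ ρ : W,
            b.repr x ρ * (ginv ν μ * (φ ((b ρ : A) * b ν) * φ ((b μ : A) * y))))
          = ∑ ν : W, ∑ ρ : W, ∑ μ : W,
            b.repr x ρ * (ginv ν μ * (φ ((b ρ : A) * b ν) * φ ((b μ : A) * y))) from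
          Finset.sum_congr rfl fun ν _ => Finset.sum_comm]
        exact Finset.sum_comm
    _ = ∑ ρ : W, b.repr x ρ * φ ((b ρ : A) * y) := by
        refine Finset.sum_congr rfl fun ρ _ => ?_
        simp only [← Finset.mul_sum]
        rw [base ρ]
    _ = φ (x * y) := (hφ y).symm

lemma lambda3_eq {k : Type*} [Field k] [CharZero k] {A : Type*} [CommRing A] [Algebra k A]
    {W : Type*} [DecidableEq W] (e : W → A) (φ : A →ₗ[k] k) (u v w : W) :
    lambda3 e φ u v w = trExt φ (C (σ := W) (R := A) (e u * e v * e w) * kker k e) := by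
  unfold lambda3
  rw [fpderiv_trExt, fpderiv_kker, fpderiv_trExt, fpderiv_C_mul, fpderiv_kker,
    fpderiv_trExt, fpderiv_C_mul, fpderiv_C_mul, fpderiv_kker]
  congr 1
  rw [← mul_assoc, ← mul_assoc, ← map_mul, ← map_mul]
  congr 2
  ring

/-- Corollary 2.2: the potential `F(t) = ⟨exp(∑ t_w e_w)⟩` satisfies
the WDVV equation `∑_{ν,μ} Λ_{ijν} g^{νμ} Λ_{μkl} = ∑_{ν,μ} Λ_{ilν} g^{νμ} Λ_{μjk}`. -/
theorem stmt4 {k : Type*} [Field k] [CharZero k]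
    {A : Type*} [CommRing A] [Algebra k A] [FiniteDimensional k A]
    {W : Type*} [Fintype W] [DecidableEq W]
    (b : Module.Basis W k A) (φ : A →ₗ[k] k)
    (hnd : ∀ a : A, (∀ a' : A, φ (a * a') = 0) → a = 0)
    (ginv : W → W → k)
    (hg : ∀ u v : W, (∑ τ : W, φ ((b u : A) * b τ) * ginv τ v) = if u = v then 1 else 0)
    (hg' : ∀ u v : W, (∑ τ : W, ginv u τ * φ ((b τ : A) * b v)) = if u = v then 1 else 0)
    (i j l m : W) :
    (∑ ν : W, ∑ μ : W, ginv ν μ •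
        (lambda3 (fun τ => (b τ : A)) φ i j ν * lambda3 (fun τ => (b τ : A)) φ μ l m)) =
      ∑ ν : W, ∑ μ : W, ginv ν μ •
        (lambda3 (fun τ => (b τ : A)) φ i m ν * lambda3 (fun τ => (b τ : A)) φ μ j l) := by
  set e : W → A := fun τ => (b τ : A) with he
  set K : MvPowerSeries W A := kker k e with hK
  -- coefficient of a product of two trExt's
  have hcoeff : ∀ (a c : A) (d : W →₀ ℕ),
      (coeff (R := k) d) (trExt φ (C (σ := W) (R := A) a * K) * trExt φ (C (σ := W) (R := A) c * K))
        = ∑ p ∈ Finset.HasAntidiagonal.antidiagonal d, φ (a * K p.1) * φ (c * K p.2) := by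
    intro a c d
    rw [coeff_mul]
    refine Finset.sum_congr rfl fun p _ => ?_
    have ha : (C (σ := W) (R := A) a * K) p.1 = a * K p.1 := coeff_C_mul _ _ _
    have hc : (C (σ := W) (R := A) c * K) p.2 = c * K p.2 := coeff_C_mul _ _ _
    show φ ((C (σ := W) (R := A) a * K) p.1) * φ ((C (σ := W) (R := A) c * K) p.2) = _
    rw [ha, hc]
  have main : ∀ (x₁ x₂ y₁ y₂ : A),
      (∑ ν : W, ∑ μ : W, ginv ν μ •
          (trExt φ (C (σ := W) (R := A) (x₁ * x₂ * e ν) * K) * trExt φ (C (σ := W) (R := A) (e μ * y₁ * y₂) * K)))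
        = fun d => ∑ p ∈ Finset.HasAntidiagonal.antidiagonal d,
            φ ((x₁ * x₂ * (y₁ * y₂)) * (K p.1 * K p.2)) := by
    intro x₁ x₂ y₁ y₂
    funext d
    have happ : (∑ ν : W, ∑ μ : W, ginv ν μ •
          (trExt φ (C (σ := W) (R := A) (x₁ * x₂ * e ν) * K) * trExt φ (C (σ := W) (R := A) (e μ * y₁ * y₂) * K))) d
        = ∑ ν : W, ∑ μ : W, ginv ν μ *
            (coeff (R := k) d) (trExt φ (C (σ := W) (R := A) (x₁ * x₂ * e ν) * K)
              * trExt φ (C (σ := W) (R := A) (e μ * y₁ * y₂) * K)) := by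
      rw [show ((∑ ν : W, ∑ μ : W, ginv ν μ •
          (trExt φ (C (σ := W) (R := A) (x₁ * x₂ * e ν) * K) * trExt φ (C (σ := W) (R := A) (e μ * y₁ * y₂) * K))) d)
        = (coeff (R := k) d) (∑ ν : W, ∑ μ : W, ginv ν μ •
          (trExt φ (C (σ := W) (R := A) (x₁ * x₂ * e ν) * K) * trExt φ (C (σ := W) (R := A) (e μ * y₁ * y₂) * K)))
        from rfl]
      rw [map_sum]
      refine Finset.sum_congr rfl fun ν _ => ?_
      rw [map_sum]
      refine Finset.sum_congr rfl fun μ _ => ?_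
      rw [map_smul, smul_eq_mul]
    rw [happ]
    calc ∑ ν : W, ∑ μ : W, ginv ν μ *
            (coeff (R := k) d) (trExt φ (C (σ := W) (R := A) (x₁ * x₂ * e ν) * K)
              * trExt φ (C (σ := W) (R := A) (e μ * y₁ * y₂) * K))
        = ∑ ν : W, ∑ μ : W, ∑ p ∈ Finset.HasAntidiagonal.antidiagonal d,
            ginv ν μ * (φ ((x₁ * x₂ * K p.1) * e ν) * φ (e μ * (y₁ * y₂ * K p.2))) := by
          refine Finset.sum_congr rfl fun ν _ => Finset.sum_congr rfl fun μ _ => ?_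
          rw [hcoeff, Finset.mul_sum]
          refine Finset.sum_congr rfl fun p _ => ?_
          congr 2
          · congr 1; ring
          · congr 1; ring
      _ = ∑ p ∈ Finset.HasAntidiagonal.antidiagonal d, ∑ ν : W, ∑ μ : W,
            ginv ν μ * (φ ((x₁ * x₂ * K p.1) * e ν) * φ (e μ * (y₁ * y₂ * K p.2))) := by
          rw [show (∑ ν : W, ∑ μ : W, ∑ p ∈ Finset.HasAntidiagonal.antidiagonal d,
              ginv ν μ * (φ ((x₁ * x₂ * K p.1) * e ν) * φ (e μ * (y₁ * y₂ * K p.2))))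
            = ∑ ν : W, ∑ p ∈ Finset.HasAntidiagonal.antidiagonal d, ∑ μ : W,
              ginv ν μ * (φ ((x₁ * x₂ * K p.1) * e ν) * φ (e μ * (y₁ * y₂ * K p.2))) from
            Finset.sum_congr rfl fun ν _ => Finset.sum_comm]
          exact Finset.sum_comm
      _ = ∑ p ∈ Finset.HasAntidiagonal.antidiagonal d,
            φ ((x₁ * x₂ * K p.1) * (y₁ * y₂ * K p.2)) := by
          exact Finset.sum_congr rfl fun p _ =>
            key_pairing b φ ginv hg (x₁ * x₂ * K p.1) (y₁ * y₂ * K p.2)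
      _ = ∑ p ∈ Finset.HasAntidiagonal.antidiagonal d,
            φ ((x₁ * x₂ * (y₁ * y₂)) * (K p.1 * K p.2)) := by
          refine Finset.sum_congr rfl fun p _ => ?_
          congr 1
          ring
  have hl : ∀ u v w : W, lambda3 e φ u v w = trExt φ (C (σ := W) (R := A) (e u * e v * e w) * K) :=
    fun u v w => lambda3_eq e φ u v w
  simp only [hl]
  rw [main (e i) (e j) (e l) (e m), main (e i) (e m) (e j) (e l)]
  funext d
  refine Finset.sum_congr rfl fun p _ => ?_
  congr 2
  ring
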